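/- (Gaussian mechanism, Theorem 1) Let ε ∈ (0,1), δ ∈ (0,1), and S > 0 be real numbers, and let ς > 0 satisfy ς² > 2·log(1.25/δ)·S²/ε². Then for all real numbers a and b with |a − b| ≤ S and every measurable set s ⊆ ℝ, the Gaussian measure with mean a and variance ς² satisfies N(a, ς²)(s) ≤ e^ε · N(b, ς²)(s) + δ. -/

import Mathlib

open MeasureTheory Real
open Set ProbabilityTheory
open scoped ENNReal NNReal

lemma Ihalf : ∀ x:ℝ, -(1/2:ℝ) * x^2 = -x^2/2 := fun x => by ring

lemma I0 : ∫ x in Ioi (0:ℝ), rexp (-x^2/2) = √(2*π)/2 := by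
  have := integral_gaussian_Ioi (1/2)
  simp_rw [Ihalf] at this
  rw [this]
  rw [show π / (1/2:ℝ) = 2*π by ring]

lemma Iexp : Integrable (fun x : ℝ => rexp (-x^2/2)) := by
  have hint : Integrable (fun x : ℝ => rexp (-(1/2) * x^2)) := integrable_exp_neg_mul_sq (by norm_num)
  simp_rw [Ihalf] at hint; exact hint

lemma Ishift (t : ℝ) (ht : 0 ≤ t) :
    ∫ x in Ioi t, rexp (-x^2/2) ≤ rexp (-t^2/2) * (√(2*π)/2) := by
  have hmp : MeasurePreserving (· + t) (volume : Measure ℝ) volume :=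
    measurePreserving_add_right volume t
  have hpre : (· + t) ⁻¹' (Ioi t) = Ioi (0:ℝ) := by
    ext x; simp [Set.mem_preimage]
  have h1 := hmp.setIntegral_preimage_emb (measurableEmbedding_addRight t)
    (fun x => rexp (-x^2/2)) (Ioi t)
  rw [hpre] at h1
  rw [← h1, ← I0, ← integral_const_mul]
  refine setIntegral_mono_on ?_ ?_ measurableSet_Ioi ?_
  · exact (Iexp.comp_add_right t).integrableOn
  · exact (Iexp.const_mul _).integrableOn
  · intro x hx
    rw [← Real.exp_add]
    apply Real.exp_le_exp.2
    have hx0 : (0:ℝ) ≤ x := le_of_lt hx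
    nlinarith [mul_nonneg hx0 ht]

lemma Ioc_bound (t : ℝ) (ht : t ≤ 0) :
    ∫ x in Ioc t (0:ℝ), rexp (-x^2/2) ≤ -t := by
  have h1 : ∫ x in Ioc t (0:ℝ), rexp (-x^2/2) ≤ ∫ _x in Ioc t (0:ℝ), (1:ℝ) := by
    refine setIntegral_mono_on Iexp.integrableOn
      (integrableOn_const measure_Ioc_lt_top.ne) measurableSet_Ioc ?_
    intro x _
    rw [Real.exp_le_one_iff]
    have := sq_nonneg x; linarith
  have h2 : ∫ _x in Ioc t (0:ℝ), (1:ℝ) = -t := by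
    rw [setIntegral_const, smul_eq_mul, mul_one, Real.volume_real_Ioc,
      max_eq_left (by linarith : (0:ℝ) ≤ 0 - t)]
    ring
  linarith [h1, h2.le, h2.ge]

lemma std_apply (s : Set ℝ) : gaussianReal 0 1 s
    = ENNReal.ofReal ((√(2*π))⁻¹ * ∫ x in s, rexp (-x^2/2)) := by
  rw [gaussianReal_apply_eq_integral 0 one_ne_zero]
  congr 1
  rw [← integral_const_mul]
  congr 1 with x
  simp [gaussianPDFReal]

lemma sqrt2pi_pos : (0:ℝ) < √(2*π) := Real.sqrt_pos.mpr (by positivity)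

lemma sqrt2pi_ge : (5/2:ℝ) ≤ √(2*π) := by
  rw [show (5/2:ℝ) = √((5/2)^2) from (Real.sqrt_sq (by norm_num)).symm]
  apply Real.sqrt_le_sqrt
  nlinarith [pi_gt_d6]

lemma std_tail_nonneg (t : ℝ) (ht : 0 ≤ t) :
    gaussianReal 0 1 (Ioi t) ≤ ENNReal.ofReal (rexp (-t^2/2) / 2) := by
  rw [std_apply]
  apply ENNReal.ofReal_le_ofReal
  have h := Ishift t ht
  have h2 : (√(2*π))⁻¹ * (rexp (-t^2/2) * (√(2*π)/2)) = rexp (-t^2/2) / 2 := by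
    field_simp
  calc (√(2*π))⁻¹ * ∫ x in Ioi t, rexp (-x^2/2)
      ≤ (√(2*π))⁻¹ * (rexp (-t^2/2) * (√(2*π)/2)) := by
        apply mul_le_mul_of_nonneg_left h (by positivity)
    _ = rexp (-t^2/2) / 2 := h2

lemma std_tail_neg (t : ℝ) (ht : t ≤ 0) :
    gaussianReal 0 1 (Ioi t) ≤ ENNReal.ofReal (1/2 + (-t) * (2/5)) := by
  have hsplit : Ioc t (0:ℝ) ∪ Ioi (0:ℝ) = Ioi t := Ioc_union_Ioi_eq_Ioi ht
  have hdisj : Disjoint (Ioc t (0:ℝ)) (Ioi (0:ℝ)) := by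
    rw [Set.disjoint_left]
    intro x hx hx2
    exact absurd hx.2 (not_le.mpr hx2)
  rw [← hsplit, measure_union hdisj measurableSet_Ioi, std_apply, std_apply]
  have h1 : (√(2*π))⁻¹ * ∫ x in Ioc t (0:ℝ), rexp (-x^2/2) ≤ (-t) * (2/5) := by
    have hb := Ioc_bound t ht
    have hInt : (0:ℝ) ≤ ∫ x in Ioc t (0:ℝ), rexp (-x^2/2) :=
      setIntegral_nonneg measurableSet_Ioc (fun x _ => (Real.exp_pos _).le)
    have hinv : (√(2*π))⁻¹ ≤ 2/5 := by
      rw [inv_le_comm₀ (sqrt2pi_pos) (by norm_num)]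
      calc (2/5:ℝ)⁻¹ = 5/2 := by norm_num
        _ ≤ √(2*π) := sqrt2pi_ge
    calc (√(2*π))⁻¹ * ∫ x in Ioc t (0:ℝ), rexp (-x^2/2)
        ≤ (2/5) * ∫ x in Ioc t (0:ℝ), rexp (-x^2/2) := by
          apply mul_le_mul_of_nonneg_right hinv hInt
      _ ≤ (2/5) * (-t) := by apply mul_le_mul_of_nonneg_left hb (by norm_num)
      _ = (-t) * (2/5) := by ring
  have h2 : (√(2*π))⁻¹ * ∫ x in Ioi (0:ℝ), rexp (-x^2/2) = 1/2 := by
    rw [I0]; field_simp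
  calc ENNReal.ofReal ((√(2*π))⁻¹ * ∫ x in Ioc t (0:ℝ), rexp (-x^2/2))
        + ENNReal.ofReal ((√(2*π))⁻¹ * ∫ x in Ioi (0:ℝ), rexp (-x^2/2))
      ≤ ENNReal.ofReal ((-t) * (2/5)) + ENNReal.ofReal (1/2) :=
        add_le_add (ENNReal.ofReal_le_ofReal h1) (le_of_eq (congrArg _ h2))
    _ = ENNReal.ofReal ((-t) * (2/5) + 1/2) := by
        rw [ENNReal.ofReal_add (by nlinarith) (by norm_num)]
    _ = ENNReal.ofReal (1/2 + (-t) * (2/5)) := by ring_nf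

lemma exp_half_le : rexp (1/2) ≤ 5/2 := by
  nlinarith [Real.exp_one_lt_d9, Real.exp_pos (1/2:ℝ),
    Real.exp_nat_mul (1/2:ℝ) 2, Real.exp_nonneg (1/2:ℝ)]

lemma exp_quarter_le : rexp (1/4) ≤ 2.21 := by
  have h4 : rexp (1/4) ^ (4:ℕ) = rexp 1 := by
    rw [← Real.exp_nat_mul]; norm_num
  nlinarith [Real.exp_one_lt_d9, Real.exp_pos (1/4:ℝ), sq_nonneg (rexp (1/4) - 2.21),
    sq_nonneg (rexp (1/4) + 2.21), sq_nonneg (rexp (1/4)^2 - 2.21^2)]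

lemma map_center_scale (a d : ℝ) (v : NNReal) :
    (gaussianReal a v).map (fun x => d*(x-a)) = gaussianReal 0 (⟨d^2, sq_nonneg d⟩ * v) := by
  have h : (fun x:ℝ => d*(x-a)) = (fun x => x + (-(d*a))) ∘ (d * ·) := by
    funext x; simp; ring
  rw [h, ← Measure.map_map (measurable_add_const _) (measurable_const_mul d),
    gaussianReal_map_const_mul d, gaussianReal_map_add_const]
  congr 1; ring

lemma scale_Ioi (w : ℝ) (hw : 0 < w) (r : ℝ) :
    gaussianReal 0 (⟨w^2, sq_nonneg w⟩ : NNReal) (Ioi r) = gaussianReal 0 1 (Ioi (r/w)) := by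
  have h : gaussianReal 0 (⟨w^2, sq_nonneg w⟩ : NNReal) = (gaussianReal 0 1).map (w * ·) := by
    rw [gaussianReal_map_const_mul w]
    congr 1
    · ring
    · ext; simp; rfl
  rw [h, Measure.map_apply (measurable_const_mul w) measurableSet_Ioi]
  congr 1
  ext x
  simp only [Set.mem_preimage, Set.mem_Ioi]
  rw [div_lt_iff₀ hw]
  constructor <;> intro h' <;> linarith [h']

lemma bad_bound (a d ς c₀ : ℝ) (hd : d ≠ 0) (hς : 0 < ς) :
    gaussianReal a (⟨ς^2, sq_nonneg ς⟩ : NNReal) {x | c₀ < d*(x-a)}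
      = gaussianReal 0 1 (Ioi (c₀/(|d| * ς))) := by
  have hset : {x | c₀ < d*(x-a)} = (fun x => d*(x-a)) ⁻¹' (Ioi c₀) := rfl
  have hmeas : Measurable (fun x:ℝ => d*(x-a)) := (measurable_id.sub_const a).const_mul d
  rw [hset, ← Measure.map_apply hmeas measurableSet_Ioi, map_center_scale a d ⟨ς^2, sq_nonneg ς⟩]
  have hv : (⟨d^2, sq_nonneg d⟩ : NNReal) * ⟨ς^2, sq_nonneg ς⟩
      = ⟨(|d| * ς)^2, sq_nonneg _⟩ := by
    ext; simp [mul_pow, sq_abs]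
  erw [hv, scale_Ioi _ (by positivity)]

lemma tail_numeric (ε δ : ℝ) (hε : ε ∈ Set.Ioo (0:ℝ) 1) (hδ : δ ∈ Set.Ioo (0:ℝ) 1)
    (c t : ℝ) (hc : 0 < c) (hc2 : 2 * Real.log (1.25/δ) < c^2)
    (htc : c - 1/(2*c) ≤ t) :
    gaussianReal 0 1 (Ioi t) ≤ ENNReal.ofReal δ := by
  obtain ⟨hδ0, hδ1⟩ := hδ
  have hkey : 1.25 * rexp (-c^2/2) < δ := by
    have h1 : (1.25:ℝ)/δ < rexp (c^2/2) := by
      calc (1.25:ℝ)/δ = rexp (Real.log (1.25/δ)) := (Real.exp_log (by positivity)).symm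
        _ < rexp (c^2/2) := Real.exp_lt_exp.2 (by linarith)
    rw [div_lt_iff₀ hδ0] at h1
    have h2 : rexp (-c^2/2) = (rexp (c^2/2))⁻¹ := by
      rw [← Real.exp_neg]; ring_nf
    have h3 : (0:ℝ) < rexp (c^2/2) := Real.exp_pos _
    rw [h2, ← div_eq_mul_inv, div_lt_iff₀ h3]
    linarith
  by_cases hcase : (1:ℝ)/2 ≤ c^2
  · -- case t₂ ≥ 0
    have ht2 : (0:ℝ) ≤ c - 1/(2*c) := by
      rw [sub_nonneg, div_le_iff₀ (by positivity)]
      nlinarith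
    have ht0 : (0:ℝ) ≤ t := le_trans ht2 htc
    refine le_trans (std_tail_nonneg t ht0) (ENNReal.ofReal_le_ofReal ?_)
    have htsq : c^2 - 1 ≤ t^2 := by
      have h5 : (c - 1/(2*c))^2 ≤ t^2 := by nlinarith
      have h6 : c^2 - 1 ≤ (c - 1/(2*c))^2 := by
        have : (c - 1/(2*c))^2 = c^2 - 1 + 1/(4*c^2) := by field_simp; ring
        rw [this]
        have : (0:ℝ) < 1/(4*c^2) := by positivity
        linarith
      linarith
    have h7 : rexp (-t^2/2) ≤ rexp (1/2) * rexp (-c^2/2) := by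
      rw [← Real.exp_add]
      exact Real.exp_le_exp.2 (by linarith)
    have h8 := exp_half_le
    have h9 : (0:ℝ) < rexp (-c^2/2) := Real.exp_pos _
    nlinarith
  · -- case t₂ < 0 : use Ioi monotonicity then std_tail_neg at t₂
    push_neg at hcase
    set t2 := c - 1/(2*c) with ht2def
    have ht2neg : t2 ≤ 0 := by
      rw [ht2def, sub_nonpos, le_div_iff₀ (by positivity)]
      nlinarith
    have hmono : gaussianReal 0 1 (Ioi t) ≤ gaussianReal 0 1 (Ioi t2) :=
      measure_mono (Set.Ioi_subset_Ioi htc)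
    refine le_trans hmono (le_trans (std_tail_neg t2 ht2neg) (ENNReal.ofReal_le_ofReal ?_))
    -- numeric: 1/2 + (1/(2c) - c)*(2/5) ≤ δ
    have hlog : (1:ℝ)/5 ≤ Real.log (1.25/δ) := by
      have h10 : Real.log (4/5:ℝ) ≤ 4/5 - 1 := Real.log_le_sub_one_of_pos (by norm_num)
      have h11 : Real.log (1.25:ℝ) = - Real.log (4/5) := by
        rw [← Real.log_inv]; norm_num
      have h12 : Real.log (1.25:ℝ) ≤ Real.log (1.25/δ) := by
        apply Real.log_le_log (by norm_num)
        rw [le_div_iff₀ hδ0]; nlinarith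
      linarith
    have hc25 : (2:ℝ)/5 < c^2 := by linarith
    have hcge : (5:ℝ)/8 < c := by nlinarith
    have hmt2 : -t2 ≤ 4/25 := by
      rw [ht2def, neg_sub]
      have : 1/(2*c) - c = (1 - 2*c^2)/(2*c) := by field_simp
      rw [this, div_le_iff₀ (by positivity)]
      nlinarith
    have hexp : rexp (-c^2/2) ≥ 100/221 := by
      have h13 : rexp (-c^2/2) ≥ rexp (-(1/4)) := Real.exp_le_exp.2 (by nlinarith)
      have h14 : rexp (-(1/4:ℝ)) = (rexp (1/4))⁻¹ := Real.exp_neg _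
      have h15 := exp_quarter_le
      have h16 : (0:ℝ) < rexp (1/4) := Real.exp_pos _
      have h17 : (rexp (1/4:ℝ))⁻¹ ≥ (2.21:ℝ)⁻¹ := by
        exact inv_anti₀ h16 h15
      have : (2.21:ℝ)⁻¹ = 100/221 := by norm_num
      linarith [h14 ▸ h13, this ▸ h17]
    have hneg2 : (0:ℝ) ≤ -t2 := neg_nonneg.2 ht2neg
    nlinarith

lemma pdf_ratio (ε a b ς : ℝ) (hς : 0 < ς) (x : ℝ)
    (hx : (a-b)*(x-a) ≤ ς^2*ε - (a-b)^2/2) :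
    gaussianPDFReal a (⟨ς^2, sq_nonneg ς⟩ : NNReal) x
      ≤ rexp ε * gaussianPDFReal b (⟨ς^2, sq_nonneg ς⟩ : NNReal) x := by
  simp only [gaussianPDFReal, NNReal.coe_mk]
  have key : rexp (-(x-a)^2/(2*ς^2)) ≤ rexp ε * rexp (-(x-b)^2/(2*ς^2)) := by
    rw [← Real.exp_add]
    apply Real.exp_le_exp.2
    have h3 : -(x-a)^2/(2*ς^2) - (-(x-b)^2/(2*ς^2)) ≤ ε := by
      rw [div_sub_div_same, div_le_iff₀ (by positivity : (0:ℝ) < 2*ς^2)]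
      nlinarith
    linarith
  apply le_trans (mul_le_mul_of_nonneg_left key (by positivity))
  apply le_of_eq
  change (√(2 * π * ς^2))⁻¹ * (rexp ε * rexp (-(x - b) ^ 2 / (2 * ς ^ 2))) =
    rexp ε * ((√(2 * π * ς^2))⁻¹ * rexp (-(x - b) ^ 2 / (2 * ς^2)))
  ring

/-- **Gaussian mechanism.** If the Gaussian noise variance `ς²` satisfies
`ς² > 2 log(1.25/δ) S² / ε²`, then for any two means `a b` with `|a - b| ≤ S`
(the `l₂` sensitivity), the Gaussian measures with mean `a` resp. `b` and
variance `ς²` satisfy the `(ε, δ)`-differential-privacy inequality. -/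
theorem gaussian_mechanism_dp
    (ε δ S ς : ℝ) (hε : ε ∈ Set.Ioo (0 : ℝ) 1) (hδ : δ ∈ Set.Ioo (0 : ℝ) 1)
    (hS : 0 < S) (hς : 0 < ς)
    (hvar : ς ^ 2 > 2 * Real.log (1.25 / δ) * S ^ 2 / ε ^ 2) :
    ∀ a b : ℝ, |a - b| ≤ S → ∀ s : Set ℝ, MeasurableSet s →
      ProbabilityTheory.gaussianReal a (⟨ς ^ 2, sq_nonneg ς⟩ : NNReal) s ≤
        ENNReal.ofReal (Real.exp ε) * ProbabilityTheory.gaussianReal b (⟨ς ^ 2, sq_nonneg ς⟩ : NNReal) s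
          + ENNReal.ofReal δ := by
  intro a b hab s hs
  set v : NNReal := (⟨ς ^ 2, sq_nonneg ς⟩ : NNReal) with hvdef
  have hvR : ((v : ℝ)) = ς^2 := rfl
  have hv : v ≠ 0 := by
    intro h
    have : (v:ℝ) = 0 := by rw [h]; simp
    rw [hvR] at this
    nlinarith
  have hexpge : (1:ℝ≥0∞) ≤ ENNReal.ofReal (rexp ε) := by
    rw [← ENNReal.ofReal_one]
    exact ENNReal.ofReal_le_ofReal (Real.one_le_exp hε.1.le)
  by_cases hd : a - b = 0
  · -- equal means
    have hab' : a = b := by linarith [sub_eq_zero.mp hd]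
    subst hab'
    calc gaussianReal a v s = 1 * gaussianReal a v s := (one_mul _).symm
      _ ≤ ENNReal.ofReal (rexp ε) * gaussianReal a v s := mul_le_mul_left hexpge _
      _ ≤ _ := le_self_add
  · set d : ℝ := a - b with hddef
    set c₀ : ℝ := ς^2*ε - d^2/2 with hc₀def
    set B : Set ℝ := {x | c₀ < d*(x-a)} with hBdef
    have hBmeas : MeasurableSet B :=
      measurableSet_lt measurable_const ((measurable_id.sub_const a).const_mul d)
    -- part 1: on s \ B the density ratio is bounded
    have hpart1 : gaussianReal a v (s \ B) ≤ ENNReal.ofReal (rexp ε) * gaussianReal b v s := by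
      rw [gaussianReal_apply a hv, gaussianReal_apply b hv]
      calc ∫⁻ x in s \ B, gaussianPDF a v x
          ≤ ∫⁻ x in s \ B, ENNReal.ofReal (rexp ε) * gaussianPDF b v x := by
            apply setLIntegral_mono ((measurable_gaussianPDF b v).const_mul _)
            intro x hx
            have hxB : ¬ (c₀ < d*(x-a)) := fun h => hx.2 h
            push_neg at hxB
            have hreal := pdf_ratio ε a b ς hς x (by rw [hc₀def] at hxB; exact hxB)
            rw [gaussianPDF, gaussianPDF, ← ENNReal.ofReal_mul (Real.exp_nonneg ε)]
            exact ENNReal.ofReal_le_ofReal hreal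
        _ = ENNReal.ofReal (rexp ε) * ∫⁻ x in s \ B, gaussianPDF b v x :=
            lintegral_const_mul _ (measurable_gaussianPDF b v)
        _ ≤ ENNReal.ofReal (rexp ε) * ∫⁻ x in s, gaussianPDF b v x := by
            apply mul_le_mul_right
            exact lintegral_mono_set diff_subset
    -- part 2: the bad set has small measure
    have hd0 : (0:ℝ) < |d| := abs_pos.mpr hd
    have hdS : |d| ≤ S := hab
    have hpart2 : gaussianReal a v B ≤ ENNReal.ofReal δ := by
      rw [hBdef, bad_bound a d ς c₀ hd hς]
      apply tail_numeric ε δ hε hδ (ς*ε/S) _ (by have h1 := hε.1; positivity)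
      · -- 2 log (1.25/δ) < c²
        have h1 : 2 * Real.log (1.25/δ) * S^2 < ς^2 * ε^2 := by
          rw [gt_iff_lt, div_lt_iff₀ (pow_pos hε.1 2)] at hvar
          linarith
        have h2 : (ς*ε/S)^2 = ς^2*ε^2/S^2 := by field_simp
        rw [h2, lt_div_iff₀ (by positivity : (0:ℝ) < S^2)]
        linarith
      · -- c - 1/(2c) ≤ t
        have hu : (0:ℝ) < |d| * ς := by positivity
        have hSne : S ≠ 0 := ne_of_gt hS
        have hςne : ς ≠ 0 := ne_of_gt hς
        have hεne : ε ≠ 0 := ne_of_gt hε.1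
        rw [le_div_iff₀ hu]
        have e1 : (ς*ε/S - 1/(2*(ς*ε/S))) * (|d| * ς) = |d| * ς^2 * ε/S - |d| * S/(2*ε) := by
          field_simp
        rw [e1]
        have t1 : |d| * ς^2 * ε/S ≤ ς^2*ε := by
          rw [div_le_iff₀ hS]
          nlinarith [mul_nonneg (sub_nonneg.2 hdS) (mul_nonneg (sq_nonneg ς) hε.1.le)]
        have t2 : d^2/2 ≤ |d| * S/(2*ε) := by
          rw [div_le_div_iff₀ (by norm_num : (0:ℝ) < 2) (by have := hε.1; positivity : (0:ℝ) < 2*ε)]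
          have habs : d^2 = |d| * |d| := by rw [sq]; exact (abs_mul_abs_self d).symm
          nlinarith [mul_le_mul_of_nonneg_left hdS (abs_nonneg d), hε.2,
            mul_nonneg (abs_nonneg d) (abs_nonneg d)]
        rw [hc₀def]
        linarith
    -- combine
    calc gaussianReal a v s = gaussianReal a v (s ∩ B) + gaussianReal a v (s \ B) :=
          (measure_inter_add_diff s hBmeas).symm
      _ ≤ gaussianReal a v B + gaussianReal a v (s \ B) := by
          exact add_le_add_left (measure_mono Set.inter_subset_right) _
      _ ≤ ENNReal.ofReal δ + ENNReal.ofReal (rexp ε) * gaussianReal b v s :=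
          add_le_add hpart2 hpart1
      _ = _ := add_comm _ _
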